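/- Let $f(\theta)=\sum_{j=0}^k a_j\cos^j(\theta)\sin^{k-j}(\theta)$ with real coefficients $a_j$. If $|f(\theta)|\leq C$ for all real $\theta$, then $|a_j|\leq 2^{k+1}C$ for every $0\leq j\leq k$. -/

import Mathlib

open Real Finset
open Polynomial Complex

noncomputable def Sm (k m : ℕ) : Polynomial ℂ :=
  (X + C Complex.I) ^ m * (X - C Complex.I) ^ (k - m)

noncomputable def Tm (k m : ℕ) : Polynomial ℂ :=
  (X - C Complex.I) ^ m * (X + C Complex.I) ^ (k - m)

lemma kraw_c (k j : ℕ) (hj : j ≤ k) :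
    ∑ m ∈ range (k + 1), (Sm k m).coeff j * (Tm k m).coeff j * (k.choose m : ℂ)
      = 2 ^ k * (k.choose j : ℂ) := by
  set B := Polynomial (Polynomial ℂ)
  set u : B := Polynomial.C (Polynomial.C Complex.I) with hu
  set y : B := Polynomial.C Polynomial.X with hy
  set P : B := (Polynomial.X + u) * (y - u) with hP
  set Q : B := (Polynomial.X - u) * (y + u) with hQ
  have hI : u * u = -1 := by
    rw [hu, ← map_mul, ← map_mul, Complex.I_mul_I]
    simp
  have step1 : P + Q = Polynomial.C (Polynomial.C 2) * (Polynomial.X * y + 1) := by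
    have h2 : (Polynomial.C (Polynomial.C (2:ℂ)) : B) = 2 := by
      rw [map_ofNat, map_ofNat]
    rw [hP, hQ, h2]
    linear_combination (-2 : B) * hI
  have key : ∑ m ∈ range (k + 1), P ^ m * Q ^ (k - m) * (k.choose m : B) = (P + Q) ^ k :=
    (add_pow P Q k).symm
  have hterm : ∀ m, P ^ m * Q ^ (k - m) =
      Polynomial.map Polynomial.C (Sm k m) * Polynomial.C (Tm k m) := by
    intro m
    rw [hP, hQ, mul_pow, mul_pow]
    simp only [Sm, Tm, Polynomial.map_mul, Polynomial.map_pow, Polynomial.map_add,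
      Polynomial.map_sub, Polynomial.map_X, Polynomial.map_C, map_mul, map_pow, map_add,
      map_sub, hu, hy]
    ring
  have hcast : ∀ m : ℕ, ((m : ℕ) : B) = Polynomial.C (Polynomial.C (m : ℂ)) := by
    intro m; simp
  have lhs_eq : ((∑ m ∈ range (k + 1), P ^ m * Q ^ (k - m) * (k.choose m : B)).coeff j).coeff j
      = ∑ m ∈ range (k + 1), (Sm k m).coeff j * (Tm k m).coeff j * (k.choose m : ℂ) := by
    rw [Polynomial.finset_sum_coeff, Polynomial.finset_sum_coeff]
    refine Finset.sum_congr rfl fun m _ => ?_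
    rw [hterm m, hcast (k.choose m), mul_assoc, ← Polynomial.C_mul,
      Polynomial.coeff_mul_C, Polynomial.coeff_map, Polynomial.coeff_C_mul,
      Polynomial.coeff_mul_C]
    ring
  have rhs_eq : (((P + Q) ^ k).coeff j).coeff j = 2 ^ k * (k.choose j : ℂ) := by
    rw [step1, mul_pow, ← map_pow, ← map_pow, add_pow]
    simp only [one_pow, mul_one]
    rw [Polynomial.coeff_C_mul, Polynomial.finset_sum_coeff]
    have hc : ∀ l ∈ range (k+1), ((Polynomial.X * y) ^ l * ((k.choose l : ℕ) : B)).coeff j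
        = if j = l then Polynomial.C ((k.choose l : ℂ)) * Polynomial.X ^ l else 0 := by
      intro l _
      rw [hcast (k.choose l), hy, mul_pow, ← map_pow, mul_assoc, ← Polynomial.C_mul,
        Polynomial.coeff_mul_C, Polynomial.coeff_X_pow]
      by_cases hjl : j = l <;> simp [hjl, mul_comm]
    rw [Finset.sum_congr rfl hc, Finset.sum_ite_eq (range (k+1)) j]
    simp only [Finset.mem_range, Nat.lt_succ_iff, hj, if_true]
    rw [mul_comm, Polynomial.coeff_mul_C, Polynomial.coeff_C_mul, Polynomial.coeff_X_pow]
    simp [mul_comm]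
  rw [← lhs_eq, key, rhs_eq]

lemma Tm_coeff (k m j : ℕ) : (Tm k m).coeff j = (starRingEnd ℂ) ((Sm k m).coeff j) := by
  have : Tm k m = Polynomial.map (starRingEnd ℂ) (Sm k m) := by
    simp only [Sm, Tm, Polynomial.map_mul, Polynomial.map_pow, Polynomial.map_add,
      Polynomial.map_sub, Polynomial.map_X, Polynomial.map_C, Complex.conj_I, map_neg]
    ring
  rw [this, Polynomial.coeff_map]

lemma kraw_r (k j : ℕ) (hj : j ≤ k) :
    ∑ m ∈ range (k + 1), ‖(Sm k m).coeff j‖ ^ 2 * (k.choose m : ℝ)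
      = 2 ^ k * (k.choose j : ℝ) := by
  have h := kraw_c k j hj
  have h2 : ∀ m, (Sm k m).coeff j * (Tm k m).coeff j
      = ((‖(Sm k m).coeff j‖ ^ 2 : ℝ) : ℂ) := by
    intro m
    rw [Tm_coeff, Complex.mul_conj, Complex.normSq_eq_norm_sq]
  rw [Finset.sum_congr rfl (fun m _ => by rw [h2 m])] at h
  exact_mod_cast h

lemma le_choose : ∀ (k m : ℕ), 1 ≤ m → m < k → k ≤ k.choose m := by
  intro k
  induction k with
  | zero => intro m h1 h2; omega
  | succ n ih =>
    intro m h1 h2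
    obtain ⟨m', rfl⟩ : ∃ m', m = m' + 1 := ⟨m - 1, by omega⟩
    have hexp : (n + 1).choose (m' + 1) = n.choose m' + n.choose (m' + 1) := by
      rw [Nat.choose_succ_succ]
    rcases lt_or_eq_of_le (Nat.lt_succ_iff.mp h2) with hlt | heq
    · have h3 := ih (m' + 1) h1 hlt
      have h4 : 1 ≤ n.choose m' := Nat.choose_pos (by omega)
      omega
    · have h5 : n.choose m' = n := by
        rw [show m' = n - 1 by omega, Nat.choose_symm (by omega), Nat.choose_one_right]
      have h6 : n.choose (m' + 1) = 1 := by rw [heq, Nat.choose_self]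
      omega

lemma recip_sum (k : ℕ) : ∑ m ∈ range (k + 1), (1 / (k.choose m : ℝ)) ≤ 3 := by
  rcases Nat.eq_zero_or_pos k with rfl | hk
  · norm_num
  obtain ⟨K, rfl⟩ : ∃ K, k = K + 1 := ⟨k - 1, by omega⟩
  rw [Finset.sum_range_succ', Finset.sum_range_succ]
  have hmid : ∀ i ∈ range K, (1 / ((K+1).choose (i+1) : ℝ)) ≤ 1 / (K+1 : ℝ) := by
    intro i hi
    have hi' := Finset.mem_range.mp hi
    have hc : (K+1 : ℕ) ≤ (K+1).choose (i+1) := le_choose (K+1) (i+1) (by omega) (by omega)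
    apply one_div_le_one_div_of_le
    · positivity
    · exact_mod_cast hc
  have hsum : ∑ i ∈ range K, (1 / ((K+1).choose (i+1) : ℝ)) ≤ K * (1 / (K+1 : ℝ)) := by
    calc ∑ i ∈ range K, (1 / ((K+1).choose (i+1) : ℝ)) ≤ ∑ _i ∈ range K, 1 / (K+1 : ℝ) :=
          Finset.sum_le_sum hmid
      _ = K * (1 / (K+1 : ℝ)) := by rw [Finset.sum_const, Finset.card_range]; ring
  have h1 : ((K+1).choose (K+1) : ℝ) = 1 := by rw [Nat.choose_self]; norm_num
  have h0 : ((K+1).choose 0 : ℝ) = 1 := by rw [Nat.choose_zero_right]; norm_num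
  rw [h1, h0]
  have hK1 : (K : ℝ) * (1 / (K+1 : ℝ)) ≤ 1 := by
    rw [mul_one_div, div_le_one (by positivity)]
    linarith
  simp only [one_div] at hsum hK1 ⊢
  norm_num
  linarith

lemma kraw_bound (k j : ℕ) (hj : j ≤ k) :
    ∑ m ∈ range (k + 1), ‖(Sm k m).coeff j‖ ≤ 2 ^ (k + 1) := by
  set x : ℕ → ℝ := fun m => ‖(Sm k m).coeff j‖ with hx
  have hwpos : ∀ m ∈ range (k+1), (0:ℝ) < (k.choose m : ℝ) := by
    intro m hm
    have hm' := Finset.mem_range.mp hm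
    exact_mod_cast Nat.choose_pos (by omega : m ≤ k)
  have hcs := Finset.sum_mul_sq_le_sq_mul_sq (range (k+1))
    (fun m => Real.sqrt (k.choose m : ℝ) * x m)
    (fun m => 1 / Real.sqrt (k.choose m : ℝ))
  have hfg : ∀ m ∈ range (k+1),
      (Real.sqrt (k.choose m : ℝ) * x m) * (1 / Real.sqrt (k.choose m : ℝ)) = x m := by
    intro m hm
    have h := hwpos m hm
    field_simp
  have hf2 : ∀ m ∈ range (k+1),
      (Real.sqrt (k.choose m : ℝ) * x m) ^ 2 = x m ^ 2 * (k.choose m : ℝ) := by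
    intro m hm
    rw [mul_pow, Real.sq_sqrt (le_of_lt (hwpos m hm))]
    ring
  have hg2 : ∀ m ∈ range (k+1),
      (1 / Real.sqrt (k.choose m : ℝ)) ^ 2 = 1 / (k.choose m : ℝ) := by
    intro m hm
    rw [div_pow, Real.sq_sqrt (le_of_lt (hwpos m hm))]
    norm_num
  rw [Finset.sum_congr rfl hfg, Finset.sum_congr rfl hf2, Finset.sum_congr rfl hg2,
    kraw_r k j hj] at hcs
  have hub : 2 ^ k * (k.choose j : ℝ) * ∑ m ∈ range (k+1), (1 / (k.choose m : ℝ))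
      ≤ (2 ^ (k+1)) ^ 2 := by
    have hcj : (k.choose j : ℝ) ≤ 2 ^ k := by
      have h' : k.choose j ≤ ∑ i ∈ range (k+1), k.choose i :=
        Finset.single_le_sum (fun i _ => Nat.zero_le _) (Finset.mem_range.mpr (by omega))
      rw [Nat.sum_range_choose] at h'
      exact_mod_cast h'
    have hr := recip_sum k
    have h3 : (0:ℝ) ≤ (k.choose j : ℝ) := by positivity
    calc 2 ^ k * (k.choose j : ℝ) * ∑ m ∈ range (k+1), (1 / (k.choose m : ℝ))
        ≤ 2 ^ k * (k.choose j : ℝ) * 3 := by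
          apply mul_le_mul_of_nonneg_left hr (by positivity)
      _ ≤ 2 ^ k * 2 ^ k * 3 := by nlinarith
      _ ≤ (2 ^ (k+1)) ^ 2 := by
          rw [show ((2:ℝ) ^ (k+1)) = 2 * 2 ^ k by rw [pow_succ]; ring]
          nlinarith [sq_nonneg ((2:ℝ) ^ k)]
  have hS2 : (∑ m ∈ range (k+1), x m) ^ 2 ≤ (2 ^ (k+1)) ^ 2 := le_trans hcs hub
  have hSnn : 0 ≤ ∑ m ∈ range (k+1), x m :=
    Finset.sum_nonneg fun m _ => norm_nonneg _
  have hB : (0:ℝ) ≤ 2 ^ (k+1) := by positivity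
  have hfin := Real.sqrt_le_sqrt hS2
  rwa [Real.sqrt_sq hSnn, Real.sqrt_sq hB] at hfin

lemma dft_bound (Q : Polynomial ℂ) (N : ℕ) (hN : 0 < N) (hdeg : Q.natDegree < N) (C : ℝ)
    (hv : ∀ r < N, ‖Q.eval (Complex.exp (2 * Real.pi * Complex.I / N) ^ r)‖ ≤ C) :
    ∀ m < N, ‖Q.coeff m‖ ≤ C := by
  intro m hm
  set ζ : ℂ := Complex.exp (2 * Real.pi * Complex.I / N) with hζ
  have hprim : IsPrimitiveRoot ζ N := Complex.isPrimitiveRoot_exp N hN.ne'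
  have hζN : ζ ^ N = 1 := hprim.pow_eq_one
  have key : (N : ℂ) * Q.coeff m = ∑ r ∈ range N, Q.eval (ζ ^ r) * ζ ^ ((N - m) * r) := by
    symm
    have heval : ∀ r, Q.eval (ζ ^ r) = ∑ n ∈ range N, Q.coeff n * (ζ ^ r) ^ n :=
      fun r => Polynomial.eval_eq_sum_range' hdeg _
    calc ∑ r ∈ range N, Q.eval (ζ ^ r) * ζ ^ ((N - m) * r)
        = ∑ r ∈ range N, ∑ n ∈ range N, Q.coeff n * (ζ ^ (n + (N - m))) ^ r := by
          refine Finset.sum_congr rfl fun r _ => ?_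
          rw [heval r, Finset.sum_mul]
          refine Finset.sum_congr rfl fun n _ => ?_
          rw [← pow_mul ζ, ← pow_mul ζ, mul_assoc, ← pow_add]
          ring_nf
      _ = ∑ n ∈ range N, Q.coeff n * ∑ r ∈ range N, (ζ ^ (n + (N - m))) ^ r := by
          rw [Finset.sum_comm]
          exact Finset.sum_congr rfl fun n _ => by rw [Finset.mul_sum]
      _ = (N : ℂ) * Q.coeff m := by
          have hinner : ∀ n ∈ range N, Q.coeff n * ∑ r ∈ range N, (ζ ^ (n + (N - m))) ^ r
              = if n = m then (N : ℂ) * Q.coeff m else 0 := by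
            intro n hn
            have hn' := Finset.mem_range.mp hn
            by_cases hnm : n = m
            · have h1 : ζ ^ (n + (N - m)) = 1 := by
                rw [hnm, show m + (N - m) = N by omega, hζN]
              rw [if_pos hnm, h1, hnm]
              simp
              ring
            · have hne : ζ ^ (n + (N - m)) ≠ 1 := by
                intro hone
                have hζne : ζ ^ (N - m) ≠ 0 := pow_ne_zero _ (Complex.exp_ne_zero _)
                have h2 : ζ ^ n * ζ ^ (N - m) = ζ ^ m * ζ ^ (N - m) := by
                  rw [← pow_add, hone, ← pow_add, show m + (N - m) = N by omega, hζN]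
                have h3 : ζ ^ n = ζ ^ m := mul_right_cancel₀ hζne h2
                exact hnm (hprim.pow_inj hn' hm h3)
              rw [if_neg hnm, geom_sum_eq hne, ← pow_mul, mul_comm (n + (N - m)) N,
                pow_mul, hζN, one_pow]
              simp

          rw [Finset.sum_congr rfl hinner, Finset.sum_ite_eq' (range N) m]
          simp [Finset.mem_range.mpr hm]
  have habs : ‖(N : ℂ) * Q.coeff m‖ ≤ N * C := by
    rw [key]
    calc ‖∑ r ∈ range N, Q.eval (ζ ^ r) * ζ ^ ((N - m) * r)‖
        ≤ ∑ r ∈ range N, ‖Q.eval (ζ ^ r) * ζ ^ ((N - m) * r)‖ := by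
          exact norm_sum_le _ _
      _ ≤ ∑ r ∈ range N, C := by
          refine Finset.sum_le_sum fun r hr => ?_
          rw [norm_mul]
          have hone : ‖ζ ^ ((N - m) * r)‖ = 1 := by
            rw [norm_pow]
            have : ‖ζ‖ = 1 := by
              rw [hζ]
              have : 2 * Real.pi * Complex.I / N = ((2 * Real.pi / N : ℝ) : ℂ) * Complex.I := by
                push_cast
                ring
              rw [this, Complex.norm_exp_ofReal_mul_I]
            rw [this, one_pow]
          rw [hone, mul_one]
          exact hv r (Finset.mem_range.mp hr)
      _ = N * C := by rw [Finset.sum_const, Finset.card_range]; simp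
  rw [norm_mul, Complex.norm_natCast] at habs
  have hNpos : (0:ℝ) < N := by exact_mod_cast hN
  exact le_of_mul_le_mul_left habs hNpos

lemma natDegree_Sm (k m : ℕ) (hm : m ≤ k) : (Sm k m).natDegree ≤ k := by
  calc (Sm k m).natDegree
        ≤ ((X + C Complex.I) ^ m).natDegree + ((X - C Complex.I) ^ (k - m)).natDegree :=
          Polynomial.natDegree_mul_le
      _ ≤ m * 1 + (k - m) * 1 := by
          gcongr
          · calc ((X + C Complex.I) ^ m).natDegree
                ≤ m * (X + C Complex.I).natDegree := Polynomial.natDegree_pow_le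
            _ ≤ m * 1 := by rw [Polynomial.natDegree_X_add_C]
          · calc ((X - C Complex.I) ^ (k - m)).natDegree
                ≤ (k - m) * (X - C Complex.I).natDegree := Polynomial.natDegree_pow_le
            _ ≤ (k - m) * 1 := by rw [Polynomial.natDegree_X_sub_C]
      _ ≤ k := by omega

theorem stmt_0 (k : ℕ) (a : ℕ → ℝ) (C : ℝ) (hC : 0 ≤ C)
    (h : ∀ θ : ℝ, |∑ j ∈ Finset.range (k + 1),
      a j * Real.cos θ ^ j * Real.sin θ ^ (k - j)| ≤ C) :
    ∀ j ≤ k, |a j| ≤ 2 ^ (k + 1) * C := by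
  intro j hj
  have hE : ∀ θ : ℝ, Complex.exp (↑θ * Complex.I)
      = ↑(Real.cos θ) + ↑(Real.sin θ) * Complex.I := by
    intro θ; rw [Complex.exp_mul_I, Complex.ofReal_cos, Complex.ofReal_sin]
  have hE' : ∀ θ : ℝ, Complex.exp (-↑θ * Complex.I)
      = ↑(Real.cos θ) - ↑(Real.sin θ) * Complex.I := by
    intro θ
    rw [show (-(θ:ℂ) * Complex.I) = (((-θ : ℝ)):ℂ) * Complex.I by push_cast; ring,
      Complex.exp_mul_I, Complex.ofReal_cos, Complex.ofReal_sin]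
    push_cast
    simp [Real.cos_neg, Real.sin_neg]
    ring
  have hprod : ∀ θ : ℝ, Complex.exp (↑θ * Complex.I) * Complex.exp (-↑θ * Complex.I) = 1 := by
    intro θ; rw [← Complex.exp_add]; ring_nf; exact Complex.exp_zero
  have hzne : ∀ θ : ℝ, Complex.exp (↑θ * Complex.I) ≠ 0 := fun θ => Complex.exp_ne_zero _
  set Qp : Polynomial ℂ := ∑ l ∈ range (k + 1), Polynomial.C ((a l : ℂ)) *
    ((X + 1) * Polynomial.C ((2:ℂ)⁻¹)) ^ l *
    ((X - 1) * Polynomial.C ((2 * Complex.I)⁻¹)) ^ (k - l) with hQp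
  have hQdeg : Qp.natDegree ≤ k := by
    apply Polynomial.natDegree_sum_le_of_forall_le
    intro l hl
    have hl' : l ≤ k := by have := Finset.mem_range.mp hl; omega
    calc (Polynomial.C ((a l : ℂ)) * ((X + 1) * Polynomial.C ((2:ℂ)⁻¹)) ^ l *
          ((X - 1) * Polynomial.C ((2 * Complex.I)⁻¹)) ^ (k - l)).natDegree
        ≤ (Polynomial.C ((a l : ℂ)) * ((X + 1) * Polynomial.C ((2:ℂ)⁻¹)) ^ l).natDegree
          + (((X - 1) * Polynomial.C ((2 * Complex.I)⁻¹)) ^ (k - l)).natDegree :=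
          Polynomial.natDegree_mul_le
      _ ≤ ((Polynomial.C ((a l : ℂ))).natDegree
            + (((X + 1) * Polynomial.C ((2:ℂ)⁻¹)) ^ l).natDegree)
          + (((X - 1) * Polynomial.C ((2 * Complex.I)⁻¹)) ^ (k - l)).natDegree := by
          gcongr
          exact Polynomial.natDegree_mul_le
      _ ≤ (0 + l * 1) + (k - l) * 1 := by
          gcongr
          · exact le_of_eq (Polynomial.natDegree_C _)
          · calc (((X + 1) * Polynomial.C ((2:ℂ)⁻¹)) ^ l).natDegree
                ≤ l * ((X + 1) * Polynomial.C ((2:ℂ)⁻¹)).natDegree :=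
                Polynomial.natDegree_pow_le
            _ ≤ l * 1 := by
                gcongr
                calc ((X + 1) * Polynomial.C ((2:ℂ)⁻¹)).natDegree
                    ≤ (X + 1 : Polynomial ℂ).natDegree + (Polynomial.C ((2:ℂ)⁻¹)).natDegree :=
                    Polynomial.natDegree_mul_le
                  _ ≤ 1 := by
                    rw [Polynomial.natDegree_C]
                    have : (X + 1 : Polynomial ℂ).natDegree ≤ 1 := by
                      rw [show (X + 1 : Polynomial ℂ) = X + Polynomial.C 1 by simp]
                      rw [Polynomial.natDegree_X_add_C]
                    omega
          · calc (((X - 1) * Polynomial.C ((2 * Complex.I)⁻¹)) ^ (k - l)).natDegree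
                ≤ (k - l) * ((X - 1) * Polynomial.C ((2 * Complex.I)⁻¹)).natDegree :=
                Polynomial.natDegree_pow_le
            _ ≤ (k - l) * 1 := by
                gcongr
                calc ((X - 1) * Polynomial.C ((2 * Complex.I)⁻¹)).natDegree
                    ≤ (X - 1 : Polynomial ℂ).natDegree + (Polynomial.C ((2 * Complex.I)⁻¹)).natDegree :=
                    Polynomial.natDegree_mul_le
                  _ ≤ 1 := by
                    rw [Polynomial.natDegree_C]
                    have : (X - 1 : Polynomial ℂ).natDegree ≤ 1 := by
                      rw [show (X - 1 : Polynomial ℂ) = X - Polynomial.C 1 by simp]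
                      rw [Polynomial.natDegree_X_sub_C]
                    omega
      _ ≤ k := by omega
  have hevalQ : ∀ θ : ℝ, Qp.eval (Complex.exp (↑θ * Complex.I) ^ 2)
      = Complex.exp (↑θ * Complex.I) ^ k *
        ∑ l ∈ range (k + 1), (a l : ℂ) * (Real.cos θ : ℂ) ^ l * (Real.sin θ : ℂ) ^ (k - l) := by
    intro θ
    set z := Complex.exp (↑θ * Complex.I) with hz
    have hz1 : z * Complex.exp (-↑θ * Complex.I) = 1 := hprod θ
    have hsum : z + Complex.exp (-↑θ * Complex.I) = 2 * ↑(Real.cos θ) := by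
      rw [hz, hE θ, hE' θ]; ring
    have hdiff : z - Complex.exp (-↑θ * Complex.I) = 2 * Complex.I * ↑(Real.sin θ) := by
      rw [hz, hE θ, hE' θ]; ring
    have h1 : z ^ 2 + 1 = z * (2 * ↑(Real.cos θ)) := by
      rw [← hsum]; linear_combination -hz1
    have h2 : z ^ 2 - 1 = z * (2 * Complex.I * ↑(Real.sin θ)) := by
      rw [← hdiff]; linear_combination hz1
    rw [hQp, Polynomial.eval_finset_sum, Finset.mul_sum]
    refine Finset.sum_congr rfl fun l hl => ?_
    have hl' : l ≤ k := by have := Finset.mem_range.mp hl; omega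
    simp only [Polynomial.eval_mul, Polynomial.eval_pow, Polynomial.eval_add,
      Polynomial.eval_sub, Polynomial.eval_one, Polynomial.eval_X, Polynomial.eval_C]
    rw [h1, h2]
    have e1 : z * (2 * ↑(Real.cos θ)) * (2:ℂ)⁻¹ = z * ↑(Real.cos θ) := by
      field_simp
    have e2 : z * (2 * Complex.I * ↑(Real.sin θ)) * (2 * Complex.I)⁻¹ = z * ↑(Real.sin θ) := by
      have h2I : (2 * Complex.I) ≠ 0 := by simp [Complex.I_ne_zero]
      field_simp
    rw [e1, e2]
    rw [show ((a l : ℂ)) * (z * ↑(Real.cos θ)) ^ l * (z * ↑(Real.sin θ)) ^ (k - l)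
        = z ^ l * z ^ (k - l) * ((a l : ℂ) * ↑(Real.cos θ) ^ l * ↑(Real.sin θ) ^ (k - l)) by
      rw [mul_pow, mul_pow]; ring]
    rw [← pow_add, show l + (k - l) = k by omega]
  have hQcoeff : ∀ m < k + 1, ‖Qp.coeff m‖ ≤ C := by
    apply dft_bound Qp (k+1) (by omega) (by omega)
    intro r hr
    set θr : ℝ := Real.pi * r / (k + 1) with hθr
    have hzr : Complex.exp (2 * Real.pi * Complex.I / ((k+1 : ℕ) : ℂ)) ^ r
        = Complex.exp (↑θr * Complex.I) ^ 2 := by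
      rw [← Complex.exp_nat_mul, ← Complex.exp_nat_mul]
      congr 1
      push_cast [hθr]
      have : ((k : ℂ) + 1) ≠ 0 := by
        intro h0
        have : ((k : ℂ) + 1) = ((k + 1 : ℕ) : ℂ) := by push_cast; ring
        rw [this] at h0
        exact_mod_cast h0
      field_simp
    rw [hzr, hevalQ θr, norm_mul]
    have habs1 : ‖Complex.exp (↑θr * Complex.I) ^ k‖ = 1 := by
      rw [norm_pow, Complex.norm_exp_ofReal_mul_I, one_pow]
    rw [habs1, one_mul]
    have hcast : (∑ l ∈ range (k + 1), (a l : ℂ) * (Real.cos θr : ℂ) ^ l *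
        (Real.sin θr : ℂ) ^ (k - l))
        = ((∑ l ∈ range (k + 1), a l * Real.cos θr ^ l * Real.sin θr ^ (k - l) : ℝ) : ℂ) := by
      push_cast
      ring
    rw [hcast, Complex.norm_real, Real.norm_eq_abs]
    exact h θr
  set Tp : Polynomial ℂ := ∑ m ∈ range (k + 1), Polynomial.C (Qp.coeff m) * Sm k m with hTp
  have hTcoeff : ∀ l, Tp.coeff l = ∑ m ∈ range (k + 1), Qp.coeff m * (Sm k m).coeff l := by
    intro l
    rw [hTp, Polynomial.finset_sum_coeff]
    exact Finset.sum_congr rfl fun m _ => Polynomial.coeff_C_mul _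
  have hrepr : ∀ θ : ℝ, Real.sin θ ≠ 0 →
      ∑ l ∈ range (k + 1), ((a l : ℂ) - Tp.coeff l) * (Real.cos θ : ℂ) ^ l *
        (Real.sin θ : ℂ) ^ (k - l) = 0 := by
    intro θ hs
    have hev := hevalQ θ
    set z := Complex.exp (↑θ * Complex.I) with hz
    set w := Complex.exp (-↑θ * Complex.I) with hw
    set c : ℂ := (Real.cos θ : ℂ) with hc
    set s : ℂ := (Real.sin θ : ℂ) with hsc
    have hsne : s ≠ 0 := Complex.ofReal_ne_zero.mpr hs
    have hz1 : z * w = 1 := hprod θ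
    have hzc : z = c + s * Complex.I := hE θ
    have hwc : w = c - s * Complex.I := hE' θ
    have hB : ∑ m ∈ range (k + 1), Qp.coeff m * ((c + s * Complex.I) ^ m *
        (c - s * Complex.I) ^ (k - m)) = ∑ l ∈ range (k + 1), (a l : ℂ) * c ^ l * s ^ (k - l) := by
      have hzk : z ^ k ≠ 0 := pow_ne_zero _ (hzne θ)
      apply mul_left_cancel₀ hzk
      rw [← hev, Polynomial.eval_eq_sum_range' (by omega : Qp.natDegree < k + 1),
        Finset.mul_sum]
      refine Finset.sum_congr rfl fun m hm => ?_
      have hm' : m ≤ k := by have := Finset.mem_range.mp hm; omega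
      rw [← hzc, ← hwc]
      have key : z ^ k * (Qp.coeff m * (z ^ m * w ^ (k - m)))
          = Qp.coeff m * (z ^ 2) ^ m * (z * w) ^ (k - m) := by
        rw [← pow_mul, mul_pow]
        rw [show z ^ k * (Qp.coeff m * (z ^ m * w ^ (k - m)))
            = Qp.coeff m * (z ^ k * z ^ m) * w ^ (k - m) from by ring, ← pow_add,
          show k + m = 2 * m + (k - m) from by omega, pow_add]
        ring
      rw [key, hz1, one_pow, mul_one]
    have hCid : ∀ m ∈ range (k + 1), (c + s * Complex.I) ^ m * (c - s * Complex.I) ^ (k - m)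
        = ∑ l ∈ range (k + 1), (Sm k m).coeff l * c ^ l * s ^ (k - l) := by
      intro m hm
      have hm' : m ≤ k := by have := Finset.mem_range.mp hm; omega
      have heval : (Sm k m).eval (c / s)
          = (c / s + Complex.I) ^ m * (c / s - Complex.I) ^ (k - m) := by
        simp [Sm]
      have heval2 : (Sm k m).eval (c / s) = ∑ l ∈ range (k + 1), (Sm k m).coeff l * (c / s) ^ l :=
        Polynomial.eval_eq_sum_range' (by have := natDegree_Sm k m hm'; omega) _
      have hsk : s ^ (k - m) * s ^ m = s ^ k := by
        rw [← pow_add]; congr 1; omega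
      have hkey : s ^ k * ((c / s + Complex.I) ^ m * (c / s - Complex.I) ^ (k - m))
          = (c + s * Complex.I) ^ m * (c - s * Complex.I) ^ (k - m) := by
        rw [← hsk]
        rw [show s ^ (k - m) * s ^ m * ((c / s + Complex.I) ^ m * (c / s - Complex.I) ^ (k - m))
            = (s * (c / s + Complex.I)) ^ m * (s * (c / s - Complex.I)) ^ (k - m) from by
          rw [mul_pow, mul_pow]; ring]
        have e1 : s * (c / s + Complex.I) = c + s * Complex.I := by field_simp; try ring
        have e2 : s * (c / s - Complex.I) = c - s * Complex.I := by field_simp; try ring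
        rw [e1, e2]
      calc (c + s * Complex.I) ^ m * (c - s * Complex.I) ^ (k - m)
          = s ^ k * ((Sm k m).eval (c / s)) := by rw [heval, hkey]
        _ = ∑ l ∈ range (k + 1), (Sm k m).coeff l * c ^ l * s ^ (k - l) := by
            rw [heval2, Finset.mul_sum]
            refine Finset.sum_congr rfl fun l hl => ?_
            have hl' : l ≤ k := by have := Finset.mem_range.mp hl; omega
            have hsl : s ^ (k - l) * s ^ l = s ^ k := by
              rw [← pow_add]; congr 1; omega
            rw [div_pow]
            rw [show s ^ k * ((Sm k m).coeff l * (c ^ l / s ^ l))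
                = (Sm k m).coeff l * c ^ l * (s ^ k / s ^ l) from by ring, ← hsl]
            rw [mul_div_assoc, div_self (pow_ne_zero _ hsne), mul_one]
    have hmain : ∑ l ∈ range (k + 1), Tp.coeff l * c ^ l * s ^ (k - l)
        = ∑ l ∈ range (k + 1), (a l : ℂ) * c ^ l * s ^ (k - l) := by
      calc ∑ l ∈ range (k+1), Tp.coeff l * c ^ l * s ^ (k - l)
          = ∑ l ∈ range (k+1), ∑ m ∈ range (k+1),
              Qp.coeff m * (Sm k m).coeff l * c ^ l * s ^ (k - l) := by
            refine Finset.sum_congr rfl fun l _ => ?_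
            rw [hTcoeff l, Finset.sum_mul, Finset.sum_mul]
        _ = ∑ m ∈ range (k+1), ∑ l ∈ range (k+1),
              Qp.coeff m * (Sm k m).coeff l * c ^ l * s ^ (k - l) := Finset.sum_comm
        _ = ∑ m ∈ range (k+1), Qp.coeff m *
              ∑ l ∈ range (k+1), (Sm k m).coeff l * c ^ l * s ^ (k - l) := by
            refine Finset.sum_congr rfl fun m _ => ?_
            rw [Finset.mul_sum]
            exact Finset.sum_congr rfl fun l _ => by ring
        _ = ∑ m ∈ range (k+1), Qp.coeff m *
              ((c + s*Complex.I)^m * (c - s*Complex.I)^(k-m)) := by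
            exact Finset.sum_congr rfl fun m hm => by rw [hCid m hm]
        _ = ∑ l ∈ range (k+1), (a l:ℂ) * c^l * s^(k-l) := hB
    have hsplit : ∑ l ∈ range (k + 1), ((a l : ℂ) - Tp.coeff l) * c ^ l * s ^ (k - l)
        = ∑ l ∈ range (k + 1), (a l : ℂ) * c ^ l * s ^ (k - l)
          - ∑ l ∈ range (k + 1), Tp.coeff l * c ^ l * s ^ (k - l) := by
      rw [← Finset.sum_sub_distrib]
      exact Finset.sum_congr rfl fun l _ => by ring
    rw [hsplit, ← hmain, sub_self]
  -- uniqueness via infinitely many roots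
  set U : Polynomial ℂ := ∑ l ∈ range (k + 1),
    Polynomial.C ((a l : ℂ) - Tp.coeff l) * X ^ l with hU
  have hUroot : ∀ t : ℝ, 0 < t → U.IsRoot (t : ℂ) := by
    intro t ht
    set θ := Real.arctan t⁻¹ with hθ
    have hθpos : 0 < θ := by
      rw [hθ, show (0:ℝ) = Real.arctan 0 by rw [Real.arctan_zero]]
      exact Real.arctan_strictMono (by positivity)
    have hθlt : θ < Real.pi/2 := Real.arctan_lt_pi_div_two _
    have hsinpos : 0 < Real.sin θ :=
      Real.sin_pos_of_pos_of_lt_pi hθpos (by linarith [Real.pi_pos])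
    have hcospos : 0 < Real.cos θ := Real.cos_pos_of_mem_Ioo ⟨by linarith [Real.pi_pos], hθlt⟩
    have htan : Real.tan θ = t⁻¹ := Real.tan_arctan _
    have hratio : t * Real.sin θ = Real.cos θ := by
      rw [Real.tan_eq_sin_div_cos] at htan
      field_simp at htan
      nlinarith [htan]
    have hrep := hrepr θ hsinpos.ne'
    show U.eval (t : ℂ) = 0
    have hct : (t : ℂ) * (Real.sin θ : ℂ) = (Real.cos θ : ℂ) := by
      exact_mod_cast congrArg Complex.ofReal hratio
    have hkne : ((Real.sin θ : ℂ)) ^ k ≠ 0 :=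
      pow_ne_zero _ (Complex.ofReal_ne_zero.mpr hsinpos.ne')
    have hzero : U.eval (t:ℂ) * (Real.sin θ : ℂ) ^ k = 0 := by
      rw [hU, Polynomial.eval_finset_sum, Finset.sum_mul, ← hrep]
      refine Finset.sum_congr rfl fun l hl => ?_
      have hl' : l ≤ k := by have := Finset.mem_range.mp hl; omega
      simp only [Polynomial.eval_mul, Polynomial.eval_pow, Polynomial.eval_C, Polynomial.eval_X]
      rw [show ((Real.sin θ : ℂ)) ^ k = ((Real.sin θ:ℂ))^l * ((Real.sin θ:ℂ))^(k-l) from by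
        rw [← pow_add]; congr 1; omega]
      rw [show ((a l:ℂ) - Tp.coeff l) * (t:ℂ) ^ l *
            (((Real.sin θ:ℂ))^l * ((Real.sin θ:ℂ))^(k-l))
          = ((a l:ℂ) - Tp.coeff l) * ((t:ℂ) * (Real.sin θ:ℂ))^l * ((Real.sin θ:ℂ))^(k-l) from by
        rw [mul_pow]; ring]
      rw [hct]
    exact (mul_eq_zero.mp hzero).resolve_right hkne
  have hU0 : U = 0 := by
    apply Polynomial.eq_zero_of_infinite_isRoot
    have hinj : Set.InjOn (fun t : ℝ => (t:ℂ)) (Set.Ioi 0) :=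
      fun x _ y _ hxy => Complex.ofReal_injective hxy
    have himg : ((fun t : ℝ => (t:ℂ)) '' Set.Ioi 0).Infinite :=
      (Set.Ioi_infinite 0).image hinj
    apply himg.mono
    rintro x ⟨t, ht, rfl⟩
    exact hUroot t ht
  have hcoeff : (a j : ℂ) = Tp.coeff j := by
    have hUc : U.coeff j = (a j : ℂ) - Tp.coeff j := by
      rw [hU, Polynomial.finset_sum_coeff]
      rw [Finset.sum_eq_single j]
      · simp [sub_mul, Polynomial.coeff_sub, Polynomial.coeff_C_mul, Polynomial.coeff_X_pow]
      · intro m _ hmj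
        simp [sub_mul, Polynomial.coeff_sub, Polynomial.coeff_C_mul, Polynomial.coeff_X_pow,
          hmj, Ne.symm hmj]
      · intro hnot
        exact absurd (Finset.mem_range.mpr (by omega)) hnot
    rw [hU0] at hUc
    simp only [Polynomial.coeff_zero] at hUc
    linear_combination -hUc
  have hfinal : ‖(a j : ℂ)‖ ≤ 2 ^ (k+1) * C := by
    rw [hcoeff, hTcoeff j]
    calc ‖∑ m ∈ range (k+1), Qp.coeff m * (Sm k m).coeff j‖
        ≤ ∑ m ∈ range (k+1), ‖Qp.coeff m * (Sm k m).coeff j‖ :=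
          norm_sum_le _ _
      _ ≤ ∑ m ∈ range (k+1), C * ‖(Sm k m).coeff j‖ := by
          refine Finset.sum_le_sum fun m hm => ?_
          rw [norm_mul]
          exact mul_le_mul_of_nonneg_right (hQcoeff m (Finset.mem_range.mp hm))
            (norm_nonneg _)
      _ = C * ∑ m ∈ range (k+1), ‖(Sm k m).coeff j‖ := by rw [Finset.mul_sum]
      _ ≤ C * 2 ^ (k+1) := mul_le_mul_of_nonneg_left (kraw_bound k j hj) hC
      _ = 2 ^ (k+1) * C := mul_comm _ _
  rwa [Complex.norm_real, Real.norm_eq_abs] at hfinal
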